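/- Let m > 0, and for 2 ≤ k ≤ N let t_k = 1/(2m+k). If P_k^↓ has density f(z) = 1_{z<1/k}·k(k−1)·C(N,k)·(1−zk)^{k−2}·Σ_{a=0}^{N−k} (−1)^a·C(N−k,a)·(1+az)^{−k} on [0,1/k], then Pr(P_k^↓ > t_k) = k·C(N,k)·Σ_{a=k}^{N} (−1)^{a−k}·C(N−k,a−k)·(1/a)·(2m/(a+2m))^{k−1}. -/

import Mathlib

open MeasureTheory Finset

lemma aux_deriv_inv_pow (k : ℕ) (b s : ℝ) (hs : s + b ≠ 0) :
    HasDerivAt (fun s : ℝ => -(((s + b) ^ (k+1))⁻¹)) (((k:ℝ)+1) * ((s + b) ^ (k + 2))⁻¹) s := by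
  have h0 : HasDerivAt (fun s : ℝ => s + b) 1 s := (hasDerivAt_id s).add_const b
  have h1 := h0.pow (k+1)
  have h2 := (h1.inv (pow_ne_zero _ hs)).neg
  refine h2.congr_deriv ?_
  have h3 : (s+b)^(k+1-1) = (s+b)^k := by norm_num
  rw [h3]
  simp only [Pi.pow_apply]
  field_simp
  push_cast
  ring

lemma aux_diff_eq (k : ℕ) (b c x : ℝ) (hb : 0 ≤ b) (hc : 0 < c) (hx : 0 < x) :
    ((c + b) ^ (k+1))⁻¹ - ((c + x + b) ^ (k+1))⁻¹
      = ∫ s in c..(c + x), ((k:ℝ)+1) * ((s + b) ^ (k+2))⁻¹ := by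
  have hle : c ≤ c + x := by linarith
  have hpos : ∀ s ∈ Set.uIcc c (c+x), 0 < s + b := by
    rw [Set.uIcc_of_le hle]; intro s hs; have := hs.1; linarith
  have hcont : ContinuousOn (fun s : ℝ => ((k:ℝ)+1) * ((s + b) ^ (k+2))⁻¹) (Set.uIcc c (c+x)) := by
    refine continuousOn_const.mul (ContinuousOn.inv₀ (by fun_prop) ?_)
    exact fun s hs => pow_ne_zero _ (hpos s hs).ne'
  have h := intervalIntegral.integral_eq_sub_of_hasDerivAt
    (f := fun s : ℝ => -(((s + b) ^ (k+1))⁻¹))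
    (f' := fun s : ℝ => ((k:ℝ)+1) * ((s + b) ^ (k+2))⁻¹)
    (fun s hs => aux_deriv_inv_pow k b s (hpos s hs).ne')
    (hcont.intervalIntegrable)
  rw [h]; ring

lemma sum_step (n : ℕ) (h : ℕ → ℝ) :
    ∑ a ∈ Finset.range (n+2), (-1:ℝ)^a * ((n+1).choose a) * h a
      = (∑ a ∈ Finset.range (n+1), (-1:ℝ)^a * (n.choose a) * h a)
        - ∑ a ∈ Finset.range (n+1), (-1:ℝ)^a * (n.choose a) * h (a+1) := by
  rw [Finset.sum_range_succ' (fun a => (-1:ℝ)^a * ((n+1).choose a) * h a) (n+1)]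
  rw [Finset.sum_range_succ' (fun a => (-1:ℝ)^a * (n.choose a) * h a) n]
  rw [Finset.sum_range_succ (fun a => (-1:ℝ)^a * (n.choose a) * h (a+1)) n]
  simp only [Nat.choose_succ_succ, Nat.cast_add, Nat.choose_self, Nat.choose_zero_right,
    Nat.cast_one, Nat.choose_succ_self, Nat.cast_zero, pow_zero]
  rw [Finset.sum_range_succ (fun x => (-1:ℝ)^(x+1) * (↑(n.choose x) + ↑(n.choose x.succ)) * h (x+1)) n]
  simp only [Nat.choose_self, Nat.choose_succ_self, Nat.cast_one, Nat.cast_zero]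
  rw [show ∑ x ∈ Finset.range n, (-1:ℝ)^(x+1) * (↑(n.choose x) + ↑(n.choose x.succ)) * h (x+1)
      = ∑ x ∈ Finset.range n, ((-1:ℝ)^(x+1) * (n.choose (x+1)) * h (x+1)
          - (-1:ℝ)^x * (n.choose x) * h (x+1)) from
    Finset.sum_congr rfl (fun a _ => by push_cast [Nat.succ_eq_add_one]; ring),
    Finset.sum_sub_distrib]
  ring

lemma alt_sum_nonneg : ∀ (n : ℕ), ∀ (k : ℕ) (x c : ℝ), 0 < x → 0 < c →
    0 ≤ ∑ a ∈ Finset.range (n+1), (-1:ℝ)^a * (n.choose a) * ((c + (a:ℝ)*x) ^ (k+1))⁻¹ := by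
  intro n
  induction n with
  | zero => intro k x c hx hc; simp; positivity
  | succ n ih =>
    intro k x c hx hc
    have hle : c ≤ c + x := by linarith
    rw [show n+1+1 = n+2 from rfl,
      sum_step n (fun a => ((c + (a:ℝ)*x) ^ (k+1))⁻¹)]
    have key : ∀ a : ℕ,
        ((c + (a:ℝ)*x) ^ (k+1))⁻¹ - ((c + ((a:ℝ)+1)*x) ^ (k+1))⁻¹
          = ∫ s in c..(c+x), ((k:ℝ)+1) * ((s + (a:ℝ)*x) ^ (k+2))⁻¹ := by
      intro a
      have h := aux_diff_eq k ((a:ℝ)*x) c x (by positivity) hc hx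
      rw [show c + ((a:ℝ)+1)*x = c + x + (a:ℝ)*x by ring]
      exact h
    have hIcc : ∀ (a : ℕ) (s : ℝ), s ∈ Set.uIcc c (c+x) → 0 < s + (a:ℝ)*x := by
      intro a s hs
      rw [Set.uIcc_of_le hle] at hs
      have h1 : 0 ≤ (a:ℝ)*x := by positivity
      have := hs.1; linarith
    have hInt : ∀ a : ℕ, IntervalIntegrable
        (fun s : ℝ => (-1:ℝ)^a * (n.choose a) * (((k:ℝ)+1) * ((s + (a:ℝ)*x) ^ (k+2))⁻¹))
        volume c (c+x) := by
      intro a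
      refine ContinuousOn.intervalIntegrable ?_
      refine continuousOn_const.mul (continuousOn_const.mul (ContinuousOn.inv₀ (by fun_prop) ?_))
      exact fun s hs => pow_ne_zero _ (hIcc a s hs).ne'
    calc (0:ℝ) ≤ ∫ s in c..(c+x), ∑ a ∈ Finset.range (n+1),
          (-1:ℝ)^a * (n.choose a) * (((k:ℝ)+1) * ((s + (a:ℝ)*x) ^ (k+2))⁻¹) := by
          apply intervalIntegral.integral_nonneg hle
          intro s hs
          have hs' : 0 < s := lt_of_lt_of_le hc hs.1
          have := ih (k+1) x s hx hs'
          calc (0:ℝ) ≤ ((k:ℝ)+1) * ∑ a ∈ Finset.range (n+1),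
                (-1:ℝ)^a * (n.choose a) * ((s + (a:ℝ)*x) ^ (k+1+1))⁻¹ := by positivity
            _ = _ := by rw [Finset.mul_sum]; exact Finset.sum_congr rfl (fun a _ => by ring)
      _ = ∑ a ∈ Finset.range (n+1), ∫ s in c..(c+x),
            (-1:ℝ)^a * (n.choose a) * (((k:ℝ)+1) * ((s + (a:ℝ)*x) ^ (k+2))⁻¹) :=
          intervalIntegral.integral_finset_sum (fun a _ => hInt a)
      _ = ∑ a ∈ Finset.range (n+1), (-1:ℝ)^a * (n.choose a) *
            (((c + (a:ℝ)*x) ^ (k+1))⁻¹ - ((c + ((a:ℝ)+1)*x) ^ (k+1))⁻¹) := by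
          refine Finset.sum_congr rfl (fun a _ => ?_)
          rw [intervalIntegral.integral_const_mul, key a]
      _ = _ := by
          rw [← Finset.sum_sub_distrib]
          refine Finset.sum_congr rfl (fun a _ => ?_)
          push_cast
          ring

lemma integral_main (j a : ℕ) (m : ℝ) (hm : 0 < m) :
    ∫ z in (1/(2*m+((j:ℝ)+2)))..(1/((j:ℝ)+2)),
      ((j:ℝ)+1) * (1 - z*((j:ℝ)+2))^j * ((1 + (a:ℝ)*z)^(j+2))⁻¹
      = ((a:ℝ)+((j:ℝ)+2))⁻¹ * (2*m/((a:ℝ)+((j:ℝ)+2)+2*m))^(j+1) := by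
  set K : ℝ := (j:ℝ)+2 with hKdef
  set A : ℝ := (a:ℝ) with hAdef
  have hK : 0 < K := by positivity
  have hA : 0 ≤ A := Nat.cast_nonneg a
  set t : ℝ := 1/(2*m+K) with htdef
  set u : ℝ := 1/K with hudef
  have hmk : 0 < 2*m+K := by linarith
  have ht : 0 < t := by positivity
  have htu : t ≤ u := by
    apply one_div_le_one_div_of_le hK; linarith
  have hvpos : ∀ z ∈ Set.uIcc t u, 0 < 1 + A*z := by
    intro z hz
    rw [Set.uIcc_of_le htu] at hz
    have : 0 < z := lt_of_lt_of_le ht hz.1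
    nlinarith
  set H : ℝ → ℝ := fun z => (A+K)⁻¹ * ((1 - z*K)^(j+1) * ((1 + A*z)^(j+1))⁻¹) with hHdef
  have hAK : (0:ℝ) < A + K := by linarith
  have hderiv : ∀ z ∈ Set.uIcc t u, HasDerivAt H
      (-(((j:ℝ)+1) * (1 - z*K)^j * ((1 + A*z)^(j+2))⁻¹)) z := by
    intro z hz
    have hv : 0 < 1 + A*z := hvpos z hz
    have h1 : HasDerivAt (fun z : ℝ => (1 - z*K)^(j+1))
        ((((j:ℕ)+1:ℕ):ℝ) * (1 - z*K)^j * (-K)) z := by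
      have hin : HasDerivAt (fun z : ℝ => 1 - z*K) (-K) z := by
        have := ((hasDerivAt_id z).mul_const K).const_sub 1
        simpa using this
      have := hin.pow (j+1)
      exact this.congr_deriv (by simp)
    have h2 : HasDerivAt (fun z : ℝ => 1 + A*z) A z := by
      have := ((hasDerivAt_id z).const_mul A).const_add 1
      simpa using this
    have h3 := (h2.pow (j+1)).inv (pow_ne_zero _ hv.ne')
    have h4 := ((h1.mul h3).const_mul ((A+K)⁻¹))
    refine h4.congr_deriv ?_
    have hne : (1 + A*z) ≠ 0 := hv.ne'
    simp only [Nat.add_sub_cancel, Nat.cast_add, Nat.cast_one, Pi.pow_apply, Pi.inv_apply, Pi.mul_apply]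
    field_simp
    ring
  have hcont : ContinuousOn
      (fun z : ℝ => -(((j:ℝ)+1) * (1 - z*K)^j * ((1 + A*z)^(j+2))⁻¹)) (Set.uIcc t u) := by
    refine ContinuousOn.neg ?_
    refine (ContinuousOn.mul (by fun_prop) (ContinuousOn.inv₀ (by fun_prop) ?_))
    exact fun z hz => pow_ne_zero _ (hvpos z hz).ne'
  have hFTC := intervalIntegral.integral_eq_sub_of_hasDerivAt hderiv hcont.intervalIntegrable
  have hHu : H u = 0 := by
    have h0 : 1 - u*K = 0 := by rw [hudef]; field_simp; ring
    simp [hHdef, h0]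
  have e1 : 1 - t*K = 2*m/(2*m+K) := by
    rw [htdef]; field_simp [hmk.ne']; ring
  have e2 : 1 + A*t = (2*m+K+A)/(2*m+K) := by
    rw [htdef]; field_simp [hmk.ne']
  have hAKm : (0:ℝ) < A + K + 2*m := by linarith
  have hHt : H t = (A+K)⁻¹ * (2*m/(A+K+2*m))^(j+1) := by
    show (A+K)⁻¹ * ((1 - t*K)^(j+1) * ((1 + A*t)^(j+1))⁻¹) = _
    rw [e1, e2, ← inv_pow, ← mul_pow]
    congr 2
    have hZ : (2*m+K+A) ≠ 0 := by positivity
    have hW : (A+K+2*m) ≠ 0 := by positivity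
    rw [inv_div]
    field_simp
    ring
  have hmain : ∫ z in t..u, ((j:ℝ)+1) * (1 - z*K)^j * ((1 + A*z)^(j+2))⁻¹ = -(H u - H t) := by
    rw [← hFTC, ← intervalIntegral.integral_neg]
    congr 1; funext z; ring
  rw [hmain, hHu, hHt]; ring

theorem stmt14 {Ω : Type*} [MeasurableSpace Ω] (μ : Measure Ω) [IsProbabilityMeasure μ]
    (N k : ℕ) (hk : 2 ≤ k) (hkN : k ≤ N) (m : ℝ) (hm : 0 < m)
    (P : Ω → ℝ) (hmeas : Measurable P)
    (hP : Measure.map P μ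
      = volume.withDensity fun (z : ℝ) => ENNReal.ofReal
          (if 0 < z ∧ z < 1 / (k : ℝ) then
            (k : ℝ) * ((k - 1 : ℕ) : ℝ) * (N.choose k) * (1 - z * k) ^ (k - 2) *
              ∑ a ∈ Finset.range (N - k + 1),
                (-1 : ℝ) ^ a * ((N - k).choose a) * ((1 + (a : ℝ) * z) ^ k)⁻¹
          else 0)) :
    μ {ω | 1 / (2 * m + k) < P ω}
      = ENNReal.ofReal ((k : ℝ) * (N.choose k) *
          ∑ a ∈ Finset.Icc k N,
            (-1 : ℝ) ^ (a - k) * ((N - k).choose (a - k)) * (1 / (a : ℝ)) *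
              (2 * m / ((a : ℝ) + 2 * m)) ^ (k - 1)) := by
  obtain ⟨j, rfl⟩ : ∃ j, k = j + 2 := ⟨k - 2, by omega⟩
  have hj2 : ((j+2:ℕ):ℝ) = (j:ℝ)+2 := by push_cast; ring
  have hsub2 : j + 2 - 2 = j := by omega
  have hsub1 : j + 2 - 1 = j + 1 := by omega
  simp only [hsub1, hsub2] at hP ⊢
  set n := N - (j + 2) with hndef
  have hK : (0:ℝ) < ((j+2:ℕ):ℝ) := by positivity
  have hmk : (0:ℝ) < 2*m + ((j+2:ℕ):ℝ) := by linarith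
  set t : ℝ := 1 / (2 * m + ((j+2:ℕ):ℝ)) with htdef
  set u : ℝ := 1 / ((j+2:ℕ):ℝ) with hudef
  have ht : 0 < t := by positivity
  have htu : t < u := by
    rw [htdef, hudef]; apply one_div_lt_one_div_of_lt hK; linarith
  set g : ℝ → ℝ := fun z => ((j+2:ℕ):ℝ) * ((j+1:ℕ):ℝ) * (N.choose (j+2)) *
      (1 - z * ((j+2:ℕ):ℝ))^j *
      ∑ a ∈ Finset.range (n+1), (-1:ℝ)^a * ((n.choose a):ℝ) * ((1 + (a:ℝ)*z)^(j+2))⁻¹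
    with hgdef
  have hvpos : ∀ (a : ℕ) (z : ℝ), t ≤ z → 0 < 1 + (a:ℝ)*z := by
    intro a z hz
    have h0 : 0 < z := lt_of_lt_of_le ht hz
    have h1 : 0 ≤ (a:ℝ)*z := by positivity
    linarith
  -- nonnegativity of g on Ioo t u
  have hgpos : ∀ z ∈ Set.Ioo t u, 0 ≤ g z := by
    intro z hz
    have hz0 : 0 < z := lt_trans ht hz.1
    have hz1 : 0 ≤ 1 - z * ((j+2:ℕ):ℝ) := by
      have h2 := hz.2
      rw [hudef] at h2
      rw [sub_nonneg]
      calc z * ((j+2:ℕ):ℝ) ≤ (1/((j+2:ℕ):ℝ)) * ((j+2:ℕ):ℝ) :=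
            mul_le_mul_of_nonneg_right (le_of_lt h2) (le_of_lt hK)
        _ = 1 := by field_simp
    have hS : 0 ≤ ∑ a ∈ Finset.range (n+1), (-1:ℝ)^a * ((n.choose a):ℝ) * ((1 + (a:ℝ)*z)^(j+2))⁻¹ :=
      alt_sum_nonneg n (j+1) z 1 hz0 one_pos
    rw [hgdef]
    have c0 : (0:ℝ) ≤ ((j+2:ℕ):ℝ) * ((j+1:ℕ):ℝ) * (N.choose (j+2)) := by positivity
    exact mul_nonneg (mul_nonneg c0 (pow_nonneg hz1 j)) hS
  -- continuity on Icc
  have hcont : ContinuousOn g (Set.Icc t u) := by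
    rw [hgdef]
    refine ContinuousOn.mul (Continuous.continuousOn (by fun_prop)) ?_
    refine continuousOn_finset_sum _ (fun a _ => ?_)
    refine ContinuousOn.mul (Continuous.continuousOn (by fun_prop))
      (ContinuousOn.inv₀ (Continuous.continuousOn (by fun_prop)) ?_)
    exact fun z hz => pow_ne_zero _ (hvpos a z hz.1).ne'
  -- step 1: to lintegral
  have step1 : μ {ω | t < P ω} = ∫⁻ z in Set.Ioi t,
      ENNReal.ofReal (if 0 < z ∧ z < u then g z else 0) := by
    rw [show {ω | t < P ω} = P ⁻¹' (Set.Ioi t) from rfl,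
      ← Measure.map_apply hmeas measurableSet_Ioi, hP,
      withDensity_apply _ measurableSet_Ioi]
  -- step 2: restrict to Ioo
  have step2 : ∫⁻ z in Set.Ioi t, ENNReal.ofReal (if 0 < z ∧ z < u then g z else 0)
      = ∫⁻ z in Set.Ioo t u, ENNReal.ofReal (g z) := by
    rw [setLIntegral_congr_fun measurableSet_Ioi (
      (fun z (hz : z ∈ Set.Ioi t) => show ENNReal.ofReal (if 0 < z ∧ z < u then g z else 0)
        = Set.indicator (Set.Ioo t u) (fun z => ENNReal.ofReal (g z)) z from by
        by_cases h : z < u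
        · rw [if_pos ⟨lt_trans ht hz, h⟩, Set.indicator_of_mem (Set.mem_Ioo.mpr ⟨hz, h⟩)]
        · rw [if_neg (fun hc => h hc.2), Set.indicator_of_notMem (fun hc => h hc.2)]
          simp))]
    rw [lintegral_indicator measurableSet_Ioo, Measure.restrict_restrict measurableSet_Ioo,
      Set.inter_eq_self_of_subset_left Set.Ioo_subset_Ioi_self]
  -- step 3: to Bochner integral
  have hint : IntegrableOn g (Set.Ioo t u) :=
    (hcont.integrableOn_Icc).mono_set Set.Ioo_subset_Icc_self
  have step3 : ∫⁻ z in Set.Ioo t u, ENNReal.ofReal (g z)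
      = ENNReal.ofReal (∫ z in Set.Ioo t u, g z) :=
    (ofReal_integral_eq_lintegral_ofReal hint
      ((ae_restrict_iff' measurableSet_Ioo).2 (ae_of_all _ hgpos))).symm
  -- step 4: to interval integral
  have step4 : ∫ z in Set.Ioo t u, g z = ∫ z in t..u, g z := by
    rw [intervalIntegral.integral_of_le htu.le, integral_Ioc_eq_integral_Ioo]
  -- step 5: compute the interval integral
  have hgsum : ∀ z : ℝ, g z = ∑ a ∈ Finset.range (n+1),
      ((-1:ℝ)^a * ((n.choose a):ℝ)) * ((((j+2:ℕ):ℝ) * (N.choose (j+2))) *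
        (((j:ℝ)+1) * (1 - z*((j:ℝ)+2))^j * ((1 + (a:ℝ)*z)^(j+2))⁻¹)) := by
    intro z
    rw [hgdef]
    simp only
    rw [Finset.mul_sum]
    refine Finset.sum_congr rfl (fun a _ => ?_)
    push_cast
    ring
  have htc : t = 1/(2*m+((j:ℝ)+2)) := by rw [htdef, hj2]
  have huc : u = 1/((j:ℝ)+2) := by rw [hudef, hj2]
  have step5 : ∫ z in t..u, g z = ∑ a ∈ Finset.range (n+1),
      ((-1:ℝ)^a * ((n.choose a):ℝ)) * ((((j+2:ℕ):ℝ) * (N.choose (j+2))) *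
        (((a:ℝ)+((j:ℝ)+2))⁻¹ * (2*m/((a:ℝ)+((j:ℝ)+2)+2*m))^(j+1))) := by
    rw [intervalIntegral.integral_congr (g := fun z => ∑ a ∈ Finset.range (n+1),
      ((-1:ℝ)^a * ((n.choose a):ℝ)) * ((((j+2:ℕ):ℝ) * (N.choose (j+2))) *
        (((j:ℝ)+1) * (1 - z*((j:ℝ)+2))^j * ((1 + (a:ℝ)*z)^(j+2))⁻¹)))
      (fun z _ => hgsum z)]
    rw [intervalIntegral.integral_finset_sum]
    · refine Finset.sum_congr rfl (fun a _ => ?_)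
      rw [intervalIntegral.integral_const_mul, intervalIntegral.integral_const_mul]
      rw [htc, huc, integral_main j a m hm]
    · intro a _
      refine ContinuousOn.intervalIntegrable ?_
      rw [Set.uIcc_of_le htu.le]
      refine ContinuousOn.mul continuousOn_const (ContinuousOn.mul continuousOn_const ?_)
      refine ContinuousOn.mul (Continuous.continuousOn (by fun_prop))
        (ContinuousOn.inv₀ (Continuous.continuousOn (by fun_prop)) ?_)
      exact fun z hz => pow_ne_zero _ (hvpos a z hz.1).ne'
  -- step 6: reindex RHS
  have step6 : ((j+2:ℕ):ℝ) * ((N.choose (j+2)):ℝ) *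
      ∑ a ∈ Finset.Icc (j+2) N,
        (-1:ℝ)^(a-(j+2)) * ((n.choose (a-(j+2))):ℝ) * (1/(a:ℝ)) *
          (2*m/((a:ℝ)+2*m))^(j+1)
      = ∑ a ∈ Finset.range (n+1),
        ((-1:ℝ)^a * ((n.choose a):ℝ)) * ((((j+2:ℕ):ℝ) * (N.choose (j+2))) *
          (((a:ℝ)+((j:ℝ)+2))⁻¹ * (2*m/((a:ℝ)+((j:ℝ)+2)+2*m))^(j+1))) := by
    rw [show Finset.Icc (j+2) N = Finset.Ico (j+2) (N+1) from by
      rw [Finset.Ico_add_one_right_eq_Icc]]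
    rw [Finset.sum_Ico_eq_sum_range]
    rw [show N + 1 - (j+2) = n + 1 from by omega]
    rw [Finset.mul_sum]
    refine Finset.sum_congr rfl (fun a _ => ?_)
    rw [show j + 2 + a - (j+2) = a from by omega]
    push_cast
    ring
  rw [step1, step2, step3, step4, step5, ← step6]
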